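/- Let (λ_k)_{k≥0} be a nondecreasing unbounded sequence of nonnegative reals satisfying λ_k ∼ C k^{1/d} (C, d > 0), let N(λ) = #{k : λ_k ≤ λ}, and let (b_k) be a bounded sequence of complex numbers. Then the Cesàro average of b truncated at spectral levels agrees with the ordinary Cesàro average: (1/(n+1)) ∑_{k=0}^n b_k − (1/N(λ_n)) ∑_{k=0}^{N(λ_n)−1} b_k → 0 as n → ∞. -/

import Mathlib

open Filter Finset

/-- Under Weyl's law `λ_k ∼ C k^{1/d}`, the Cesàro average of a bounded
sequence `b` truncated at the spectral levels `N(λ_n)` agrees asymptotically with the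
ordinary Cesàro average. -/
theorem cesaro_sub_spectral_cesaro_tendsto_zero
    (d C : ℝ) (hd : 0 < d) (hC : 0 < C)
    (lam : ℕ → ℝ) (hmono : Monotone lam) (hpos : ∀ k, 0 ≤ lam k)
    (htop : Tendsto lam atTop atTop)
    (hweyl : Tendsto (fun k : ℕ => lam k * Real.rpow (k : ℝ) (-(1 / d))) atTop (nhds C))
    (N : ℝ → ℕ) (hN : ∀ (x : ℝ) (k : ℕ), lam k ≤ x ↔ k < N x)
    (b : ℕ → ℂ) (hb : ∃ K : ℝ, ∀ k, ‖b k‖ ≤ K) :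
    Tendsto (fun n : ℕ =>
        ((n : ℂ) + 1)⁻¹ * ∑ k ∈ range (n + 1), b k
      - ((N (lam n) : ℂ))⁻¹ * ∑ k ∈ range (N (lam n)), b k)
      atTop (nhds 0) := by
  obtain ⟨K, hK⟩ := hb
  have hK0 : 0 ≤ K := (norm_nonneg _).trans (hK 0)
  set m : ℕ → ℕ := fun n => N (lam n) with hmdef
  have hmn : ∀ n, n + 1 ≤ m n := fun n => (hN (lam n) n).mp le_rfl
  set f : ℕ → ℝ := fun k => lam k * Real.rpow (k : ℝ) (-(1 / d)) with hfdef
  have hm1ge : ∀ n, n ≤ m n - 1 := fun n => by have := hmn n; omega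
  have hm1top : Tendsto (fun n => m n - 1) atTop atTop :=
    tendsto_atTop_mono hm1ge tendsto_id
  have hfpos : ∀ᶠ k in atTop, 0 < f k := hweyl.eventually (eventually_gt_nhds hC)
  -- identity lam k = f k * k^(1/d) for k ≥ 1
  have key : ∀ k : ℕ, 1 ≤ k → f k * (k : ℝ) ^ (1 / d) = lam k := by
    intro k hk
    have hk0 : (0 : ℝ) < k := by exact_mod_cast hk
    show lam k * Real.rpow (k:ℝ) (-(1/d)) * (k:ℝ) ^ (1/d) = lam k
    rw [Real.rpow_eq_pow, mul_assoc, ← Real.rpow_add hk0]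
    simp
  set q : ℕ → ℝ := fun n => ((m n - 1 : ℕ) : ℝ) / (n : ℝ) with hqdef
  have hq_nonneg : ∀ n, 0 ≤ q n := fun n => by positivity
  -- q n ^ (1/d) ≤ f n / f (m n - 1) eventually
  have hub : ∀ᶠ n in atTop, q n ^ (1 / d) ≤ f n / f (m n - 1) := by
    filter_upwards [eventually_ge_atTop 1, hfpos, hm1top.eventually hfpos]
      with n hn hfn hfm
    have hlt : m n - 1 < m n := by have := hmn n; omega
    have hlam : lam (m n - 1) ≤ lam n := (hN (lam n) (m n - 1)).mpr hlt
    have hineq : f (m n - 1) * ((m n - 1 : ℕ) : ℝ) ^ (1 / d) ≤ f n * (n : ℝ) ^ (1 / d) := by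
      rw [key _ (le_trans hn (hm1ge n)), key _ hn]; exact hlam
    have hn0 : (0 : ℝ) < (n : ℝ) := by exact_mod_cast hn
    have hnp : (0 : ℝ) < (n : ℝ) ^ (1 / d) := Real.rpow_pos_of_pos hn0 _
    rw [hqdef, Real.div_rpow (by positivity) (by positivity), div_le_div_iff₀ hnp hfm]
    nlinarith [hineq]
  have hlb : ∀ᶠ n in atTop, (1 : ℝ) ≤ q n ^ (1 / d) := by
    filter_upwards [eventually_ge_atTop 1] with n hn
    have h1 : (1 : ℝ) ≤ q n := by
      rw [hqdef, le_div_iff₀ (by exact_mod_cast hn)]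
      have := hm1ge n
      simp only [one_mul]
      exact_mod_cast this
    calc (1:ℝ) = 1 ^ (1/d) := (Real.one_rpow _).symm
      _ ≤ q n ^ (1/d) := Real.rpow_le_rpow zero_le_one h1 (by positivity)
  have hubt : Tendsto (fun n => f n / f (m n - 1)) atTop (nhds 1) := by
    have := hweyl.div (hweyl.comp hm1top) hC.ne'
    rwa [div_self hC.ne'] at this
  have hqpow : Tendsto (fun n => q n ^ (1 / d)) atTop (nhds 1) :=
    tendsto_of_tendsto_of_tendsto_of_le_of_le' tendsto_const_nhds hubt hlb hub
  have hq1 : Tendsto q atTop (nhds 1) := by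
    have h := hqpow.rpow_const (p := d) (Or.inr hd.le)
    rw [Real.one_rpow] at h
    refine h.congr fun n => ?_
    rw [← Real.rpow_mul (hq_nonneg n), div_mul_cancel₀ _ hd.ne', Real.rpow_one]
  -- ratio m n / (n+1) → 1
  have hr : Tendsto (fun n => (m n : ℝ) / ((n : ℝ) + 1)) atTop (nhds 1) := by
    have hnn : Tendsto (fun n : ℕ => (n : ℝ) / ((n : ℝ) + 1)) atTop (nhds 1) :=
      tendsto_natCast_div_add_atTop (1 : ℝ)
    have h1n : Tendsto (fun n : ℕ => 1 / ((n : ℝ) + 1)) atTop (nhds 0) :=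
      tendsto_one_div_add_atTop_nhds_zero_nat
    have htot := (hq1.mul hnn).add h1n
    rw [one_mul, add_zero] at htot
    refine htot.congr' ?_
    filter_upwards [eventually_ge_atTop 1] with n hn
    have hn0 : ((n : ℝ)) ≠ 0 := by
      have : (0:ℕ) < n := hn
      exact_mod_cast this.ne'
    have hm1 : ((m n - 1 : ℕ) : ℝ) = (m n : ℝ) - 1 := by
      have h1 : 1 ≤ m n := le_trans (by omega) (hmn n)
      push_cast [Nat.cast_sub h1]
      ring
    show q n * ((n : ℝ) / ((n : ℝ) + 1)) + 1 / ((n : ℝ) + 1) = (m n : ℝ) / ((n : ℝ) + 1)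
    rw [hqdef]
    simp only [hm1]
    field_simp
    ring
  have ht : Tendsto (fun n : ℕ => ((n : ℝ) + 1) / (m n : ℝ)) atTop (nhds 1) := by
    have hti := hr.inv₀ one_ne_zero
    rw [inv_one] at hti
    refine hti.congr fun n => ?_
    rw [inv_div]
  have hu : Tendsto (fun n : ℕ => 2 * K * (1 - ((n : ℝ) + 1) / (m n : ℝ))) atTop (nhds 0) := by
    have h1 := ((tendsto_const_nhds (x := (1:ℝ)) (f := atTop)).sub ht).const_mul (2*K)
    simpa using h1
  have hbound : ∀ n : ℕ, ‖((n : ℂ) + 1)⁻¹ * ∑ k ∈ range (n + 1), b k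
      - ((m n : ℕ) : ℂ)⁻¹ * ∑ k ∈ range (m n), b k‖
      ≤ 2 * K * (1 - ((n : ℝ) + 1) / (m n : ℝ)) := by
    intro n
    have haM : n + 1 ≤ m n := hmn n
    have haR : (0:ℝ) < (n:ℝ) + 1 := by positivity
    have hMR : (0:ℝ) < (m n : ℝ) := by exact_mod_cast Nat.lt_of_lt_of_le n.succ_pos haM
    have hMcast : ((m n : ℝ)) = ((m n : ℕ) : ℝ) := rfl
    have hsplit : ∑ k ∈ range (m n), b k
        = ∑ k ∈ range (n+1), b k + ∑ k ∈ Ico (n+1) (m n), b k :=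
      (Finset.sum_range_add_sum_Ico _ haM).symm
    have hE : ((n : ℂ) + 1)⁻¹ * ∑ k ∈ range (n + 1), b k
        - ((m n : ℕ) : ℂ)⁻¹ * ∑ k ∈ range (m n), b k
        = (((n:ℂ)+1)⁻¹ - ((m n : ℕ):ℂ)⁻¹) * ∑ k ∈ range (n+1), b k
          - ((m n : ℕ):ℂ)⁻¹ * ∑ k ∈ Ico (n+1) (m n), b k := by
      rw [hsplit]; ring
    rw [hE]
    have h1 : ‖∑ k ∈ range (n+1), b k‖ ≤ ((n:ℝ)+1) * K := by
      calc ‖∑ k ∈ range (n+1), b k‖ ≤ ∑ k ∈ range (n+1), ‖b k‖ := norm_sum_le _ _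
        _ ≤ ∑ _k ∈ range (n+1), K := Finset.sum_le_sum fun k _ => hK k
        _ = ((n:ℝ)+1) * K := by
            rw [Finset.sum_const, card_range, nsmul_eq_mul]; push_cast; ring
    have h2 : ‖∑ k ∈ Ico (n+1) (m n), b k‖ ≤ ((m n : ℝ) - ((n:ℝ)+1)) * K := by
      calc ‖∑ k ∈ Ico (n+1) (m n), b k‖ ≤ ∑ k ∈ Ico (n+1) (m n), ‖b k‖ := norm_sum_le _ _
        _ ≤ ∑ _k ∈ Ico (n+1) (m n), K := Finset.sum_le_sum fun k _ => hK k
        _ = ((m n : ℝ) - ((n:ℝ)+1)) * K := by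
            rw [Finset.sum_const, Nat.card_Ico, nsmul_eq_mul, Nat.cast_sub haM]; push_cast; ring
    have hinv : ((m n:ℝ))⁻¹ ≤ ((n:ℝ)+1)⁻¹ := by
      apply inv_anti₀ haR
      exact_mod_cast haM
    have hnorm1 : ‖(((n:ℂ)+1)⁻¹ - ((m n : ℕ):ℂ)⁻¹)‖ = ((n:ℝ)+1)⁻¹ - ((m n:ℝ))⁻¹ := by
      have hcast : ((n:ℂ)+1)⁻¹ - ((m n : ℕ):ℂ)⁻¹
          = (((((n:ℝ)+1)⁻¹ - ((m n:ℝ))⁻¹ : ℝ)) : ℂ) := by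
        push_cast; ring
      rw [hcast, Complex.norm_real, Real.norm_eq_abs, abs_of_nonneg (sub_nonneg.mpr hinv)]
    have hnorm2 : ‖(((m n : ℕ):ℂ))⁻¹‖ = ((m n:ℝ))⁻¹ := by
      rw [norm_inv, Complex.norm_natCast]
    calc ‖(((n:ℂ)+1)⁻¹ - ((m n : ℕ):ℂ)⁻¹) * ∑ k ∈ range (n+1), b k
          - ((m n : ℕ):ℂ)⁻¹ * ∑ k ∈ Ico (n+1) (m n), b k‖
        ≤ ‖(((n:ℂ)+1)⁻¹ - ((m n : ℕ):ℂ)⁻¹) * ∑ k ∈ range (n+1), b k‖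
          + ‖((m n : ℕ):ℂ)⁻¹ * ∑ k ∈ Ico (n+1) (m n), b k‖ := norm_sub_le _ _
      _ = (((n:ℝ)+1)⁻¹ - ((m n:ℝ))⁻¹) * ‖∑ k ∈ range (n+1), b k‖
          + ((m n:ℝ))⁻¹ * ‖∑ k ∈ Ico (n+1) (m n), b k‖ := by
            rw [norm_mul, norm_mul, hnorm1, hnorm2]
      _ ≤ (((n:ℝ)+1)⁻¹ - ((m n:ℝ))⁻¹) * (((n:ℝ)+1) * K)
          + ((m n:ℝ))⁻¹ * (((m n : ℝ) - ((n:ℝ)+1)) * K) := by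
            have hs := sub_nonneg.mpr hinv
            gcongr
      _ = 2 * K * (1 - ((n : ℝ) + 1) / (m n : ℝ)) := by
            field_simp
            ring
  rw [tendsto_zero_iff_norm_tendsto_zero]
  exact squeeze_zero (fun n => norm_nonneg _) hbound hu
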